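/- Let p be an odd prime and let n be the number of non-squares of F_p whose least nonnegative residue lies in the interval [1, (p−1)/2]. Then |n − (p−1)/4| ≤ (1/2)·√p·ln(p) over the real numbers. -/

import Mathlib

open Finset Real Complex

lemma aux_one_div_le_log (k : ℕ) (hk : 1 ≤ k) :
    (1 : ℝ) / k ≤ Real.log (2 * k + 1) - Real.log (2 * k - 1) := by
  have ht : (1 : ℝ) ≤ (k : ℝ) := by exact_mod_cast hk
  set t : ℝ := (k : ℝ) with htdef
  have ht0 : (0:ℝ) < t := by linarith
  have hx0 : (0:ℝ) ≤ 1 / t := by positivity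
  have hx1 : 1 / t ≤ 1 := by
    rw [div_le_one ht0]; linarith
  have hexp := Real.exp_bound' hx0 hx1 (n := 4) (by norm_num)
  have hsum : (∑ m ∈ Finset.range 4, (1/t) ^ m / m.factorial) =
      1 + 1/t + (1/t)^2/2 + (1/t)^3/6 := by
    norm_num [Finset.sum_range_succ, Nat.factorial]
  rw [hsum] at hexp
  have h2t1 : (0:ℝ) < 2*t - 1 := by linarith
  have hkey : Real.exp (1/t) * (2*t - 1) ≤ 2*t + 1 := by
    have h4 : ((4:ℕ).factorial : ℝ) = 24 := by norm_num [Nat.factorial]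
    rw [h4] at hexp
    refine le_trans (mul_le_mul_of_nonneg_right hexp h2t1.le) ?_
    have ht4 : (0:ℝ) < t^4 := by positivity
    rw [← sub_nonneg]
    have key : 2*t+1 - (1 + 1/t + (1/t)^2/2 + (1/t)^3/6 + (1/t)^4 * ((4:ℕ)+1)/(24*(4:ℕ))) * (2*t-1)
        = (16*t^2 + 6*t + 5)/(96*t^4) := by
      field_simp
      ring
    rw [key]
    positivity
  have h2t1' : (0:ℝ) < 2*t + 1 := by linarith
  have hlog : Real.log (Real.exp (1/t) * (2*t - 1)) ≤ Real.log (2*t+1) :=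
    Real.log_le_log (by positivity) hkey
  rw [Real.log_mul (Real.exp_pos _).ne' h2t1.ne', Real.log_exp] at hlog
  linarith

lemma aux_harmonic_le_log (m : ℕ) :
    ∑ j ∈ Finset.Icc 1 m, (1 : ℝ) / j ≤ Real.log (2 * m + 1) := by
  induction m with
  | zero => simp
  | succ m ih =>
    rw [Finset.sum_Icc_succ_top (Nat.succ_le_succ (Nat.zero_le m))]
    have h := aux_one_div_le_log (m+1) (Nat.succ_le_succ (Nat.zero_le m))
    have hcast : ((2:ℝ) * (m+1:ℕ) - 1) = 2 * (m:ℝ) + 1 := by push_cast; ring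
    rw [hcast] at h
    push_cast at h ⊢
    linarith

lemma aux_geom_bound (z : ℂ) (hz : ‖z‖ = 1) (hz1 : z ≠ 1) (H : ℕ) :
    ‖(∑ m ∈ Finset.Icc 1 H, z ^ m)‖ ≤ 2 / ‖(z - 1)‖ := by
  have hz0 : z - 1 ≠ 0 := sub_ne_zero.mpr hz1
  have habs : 0 < ‖(z - 1)‖ := norm_pos_iff.mpr hz0
  rw [le_div_iff₀ habs, ← norm_mul]
  have hmul : (∑ m ∈ Finset.Icc 1 H, z ^ m) * (z - 1) = z ^ (H+1) - z ^ 1 := by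
    rw [← Finset.Ico_add_one_right_eq_Icc]
    exact geom_sum_Ico_mul z (by omega)
  rw [hmul]
  calc ‖(z ^ (H+1) - z ^ 1)‖
      ≤ ‖(z ^ (H+1))‖ + ‖(z ^ 1)‖ := norm_sub_le _ _
    _ = 2 := by rw [norm_pow, norm_pow, hz, one_pow, one_pow]; norm_num

lemma aux_sin_helper (p j : ℕ) (hp0 : 0 < p) (h2 : 2 * j ≤ p) :
    2 * (j : ℝ) / p ≤ Real.sin (π * j / p) := by
  have hp0' : (0:ℝ) < p := by exact_mod_cast hp0
  have hj : (2:ℝ) * j ≤ p := by exact_mod_cast h2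
  have hle : π * j / p ≤ π / 2 := by
    rw [div_le_div_iff₀ hp0' two_pos]
    nlinarith [Real.pi_pos]
  have h := Real.mul_le_sin (x := π * j / p) (by positivity) hle
  have : 2 / π * (π * j / p) = 2 * j / p := by
    field_simp
  linarith [this ▸ h]

lemma aux_sin_ge (p j : ℕ) (hp : Odd p) (h1 : 1 ≤ j) (h2 : j ≤ p - 1) :
    2 * ((min j (p - j) : ℕ) : ℝ) / p ≤ Real.sin (π * j / p) := by
  have hpodd : p % 2 = 1 := Nat.odd_iff.mp hp
  have hp0 : 0 < p := by omega
  rcases le_or_gt (2 * j) p with hle | hlt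
  · have hmin : min j (p - j) = j := min_eq_left (by omega)
    rw [hmin]
    exact aux_sin_helper p j hp0 hle
  · have hmin : min j (p - j) = p - j := min_eq_right (by omega)
    rw [hmin]
    have hjp : j ≤ p := by omega
    have hcast : ((p - j : ℕ) : ℝ) = (p : ℝ) - j := Nat.cast_sub hjp
    have hθ : π * j / p = π - π * ((p - j : ℕ) : ℝ) / p := by
      rw [hcast]
      have hp0' : (p:ℝ) ≠ 0 := by positivity
      field_simp
      ring
    rw [hθ, Real.sin_pi_sub]
    exact aux_sin_helper p (p - j) hp0 (by omega)

lemma aux_abs_exp (p j : ℕ) (hp : Odd p) (h1 : 1 ≤ j) (h2 : j ≤ p - 1) :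
    4 * ((min j (p - j) : ℕ) : ℝ) / p ≤ ‖(Complex.exp (2 * π * Complex.I * j / p) - 1)‖ := by
  have hp0 : (0:ℝ) < p := by
    have : 0 < p := hp.pos
    exact_mod_cast this
  set θ : ℝ := π * j / p with hθdef
  have hexp : Complex.exp (2 * π * Complex.I * j / p) = Complex.exp ((2*θ : ℝ) * Complex.I) := by
    congr 1
    rw [hθdef]
    push_cast
    ring
  have hre : (Complex.exp (((2*θ : ℝ)) * Complex.I) - 1).re = Real.cos (2*θ) - 1 := by
    rw [Complex.sub_re, Complex.exp_ofReal_mul_I_re, Complex.one_re]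
  have him : (Complex.exp (((2*θ : ℝ)) * Complex.I) - 1).im = Real.sin (2*θ) := by
    rw [Complex.sub_im, Complex.exp_ofReal_mul_I_im, Complex.one_im, sub_zero]
  have hsin : 0 ≤ Real.sin θ := by
    apply Real.sin_nonneg_of_nonneg_of_le_pi
    · positivity
    · rw [hθdef]
      rw [div_le_iff₀ hp0]
      have : (j:ℝ) ≤ p := by
        have : j ≤ p := by omega
        exact_mod_cast this
      nlinarith [Real.pi_pos]
  have habs : ‖(Complex.exp (((2*θ : ℝ)) * Complex.I) - 1)‖ = 2 * Real.sin θ := by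
    rw [Complex.norm_def, Complex.normSq_apply, hre, him]
    have hc : Real.cos (2*θ) = 1 - 2 * Real.sin θ ^ 2 := by
      have := Real.sin_sq_eq_half_sub θ
      linarith
    have : (Real.cos (2*θ) - 1) * (Real.cos (2*θ) - 1) + Real.sin (2*θ) * Real.sin (2*θ)
        = (2 * Real.sin θ) ^ 2 := by
      have hs2 : Real.sin (2*θ) ^ 2 = 1 - Real.cos (2*θ) ^ 2 := by
        have := Real.sin_sq_add_cos_sq (2*θ)
        linarith
      nlinarith [hs2, hc]
    rw [this, Real.sqrt_sq (by linarith)]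
  rw [hexp, habs]
  have := aux_sin_ge p j hp h1 h2
  rw [← hθdef] at this
  rw [div_le_iff₀ hp0] at this ⊢
  linarith

lemma aux_psi_bound (p : ℕ) [Fact p.Prime] (hp : Odd p) (k : ZMod p) (hk : k ≠ 0) :
    ‖(∑ x ∈ Finset.univ.filter
        (fun x : ZMod p => 1 ≤ x.val ∧ x.val ≤ (p-1)/2), ZMod.stdAddChar (k * x))‖
      ≤ (p : ℝ) / (2 * ((min k.val (p - k.val) : ℕ) : ℝ)) := by
  haveI : NeZero p := ⟨(Fact.out : p.Prime).ne_zero⟩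
  have hpodd : p % 2 = 1 := Nat.odd_iff.mp hp
  have hp2 : 2 ≤ p := (Fact.out : p.Prime).two_le
  set z : ℂ := ZMod.stdAddChar k with hzdef
  have hzabs : ‖z‖ = 1 := by
    rw [hzdef, ZMod.stdAddChar_apply]
    exact Circle.norm_coe _
  have hz1 : z ≠ 1 := by
    intro h
    apply hk
    apply ZMod.injective_stdAddChar
    rw [← hzdef, h, AddChar.map_zero_eq_one]
  have hval1 : 1 ≤ k.val := ZMod.val_pos.mpr hk
  have hvalp : k.val ≤ p - 1 := by
    have := ZMod.val_lt k
    omega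
  -- reindex the sum
  have hre : ∑ x ∈ Finset.univ.filter
        (fun x : ZMod p => 1 ≤ x.val ∧ x.val ≤ (p-1)/2), ZMod.stdAddChar (k * x)
      = ∑ m ∈ Finset.Icc 1 ((p-1)/2), z ^ m := by
    refine Finset.sum_nbij' (fun x => x.val) (fun m => (m : ZMod p)) ?_ ?_ ?_ ?_ ?_
    · intro a ha
      simp only [Finset.mem_filter, Finset.mem_univ, true_and] at ha
      simp [Finset.mem_Icc, ha.1, ha.2]
    · intro m hm
      simp only [Finset.mem_Icc] at hm
      have hmp : m < p := by omega
      simp only [Finset.mem_filter, Finset.mem_univ, true_and]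
      rw [ZMod.val_natCast_of_lt hmp]
      exact hm
    · intro a _
      exact ZMod.natCast_rightInverse a
    · intro m hm
      simp only [Finset.mem_Icc] at hm
      exact ZMod.val_natCast_of_lt (by omega)
    · intro a ha
      simp only [Finset.mem_filter, Finset.mem_univ, true_and] at ha
      rw [hzdef, ← AddChar.map_nsmul_eq_pow]
      congr 1
      rw [nsmul_eq_mul, ZMod.natCast_rightInverse a, mul_comm]
  rw [hre]
  have hgeom := aux_geom_bound z hzabs hz1 ((p-1)/2)
  refine le_trans hgeom ?_
  -- z = exp(2 π I k.val / p)
  have hzexp : z = Complex.exp (2 * π * Complex.I * k.val / p) := by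
    have hcast : (((k.val : ℤ)) : ZMod p) = k := by
      push_cast
      exact ZMod.natCast_rightInverse k
    conv_lhs => rw [hzdef, ← hcast, ZMod.stdAddChar_coe]
    norm_num
  have hlow := aux_abs_exp p k.val hp hval1 hvalp
  rw [← hzexp] at hlow
  have hmin1 : 1 ≤ min k.val (p - k.val) := by omega
  have hminpos : (0:ℝ) < ((min k.val (p - k.val) : ℕ) : ℝ) := by exact_mod_cast hmin1
  have hppos : (0:ℝ) < p := by positivity
  have h4 : (0:ℝ) < 4 * ((min k.val (p - k.val) : ℕ) : ℝ) / p := by positivity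
  calc 2 / ‖(z - 1)‖ ≤ 2 / (4 * ((min k.val (p - k.val) : ℕ) : ℝ) / p) := by
        apply div_le_div_of_nonneg_left (by norm_num) h4 hlow
    _ = (p : ℝ) / (2 * ((min k.val (p - k.val) : ℕ) : ℝ)) := by
        field_simp
        ring

lemma aux_sum_min (p : ℕ) (hp : Odd p) (hp2 : 2 ≤ p) :
    ∑ j ∈ Finset.Icc 1 (p-1), (p:ℝ)/(2 * ((min j (p - j) : ℕ) : ℝ)) ≤ (p:ℝ) * Real.log p := by
  have hpodd : p % 2 = 1 := Nat.odd_iff.mp hp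
  set H := (p-1)/2 with hH
  have hpH : p = 2*H + 1 := by omega
  have hsplit : ∑ j ∈ Finset.Ico 1 (H+1), (p:ℝ)/(2 * ((min j (p - j) : ℕ) : ℝ))
      + ∑ j ∈ Finset.Ico (H+1) (2*H+1), (p:ℝ)/(2 * ((min j (p - j) : ℕ) : ℝ))
      = ∑ j ∈ Finset.Icc 1 (p-1), (p:ℝ)/(2 * ((min j (p - j) : ℕ) : ℝ)) := by
    rw [Finset.sum_Ico_consecutive _ (by omega) (by omega)]
    congr 1
    rw [← Finset.Ico_add_one_right_eq_Icc]
    congr 1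
    omega
  rw [← hsplit]
  have hfirst : ∑ j ∈ Finset.Ico 1 (H+1), (p:ℝ)/(2 * ((min j (p - j) : ℕ) : ℝ))
      = ∑ j ∈ Finset.Icc 1 H, (p:ℝ)/(2 * (j:ℝ)) := by
    rw [Finset.Ico_add_one_right_eq_Icc]
    refine Finset.sum_congr rfl fun j hj => ?_
    simp only [Finset.mem_Icc] at hj
    have : min j (p - j) = j := min_eq_left (by omega)
    rw [this]
  have hsecond : ∑ j ∈ Finset.Ico (H+1) (2*H+1), (p:ℝ)/(2 * ((min j (p - j) : ℕ) : ℝ))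
      = ∑ j ∈ Finset.Icc 1 H, (p:ℝ)/(2 * (j:ℝ)) := by
    refine Finset.sum_nbij' (fun j => p - j) (fun j => p - j) ?_ ?_ ?_ ?_ ?_
    · intro a ha
      simp only [Finset.mem_Ico] at ha
      simp only [Finset.mem_Icc]
      omega
    · intro a ha
      simp only [Finset.mem_Icc] at ha
      simp only [Finset.mem_Ico]
      omega
    · intro a ha
      simp only [Finset.mem_Ico] at ha
      show p - (p - a) = a
      omega
    · intro a ha
      simp only [Finset.mem_Icc] at ha
      show p - (p - a) = a
      omega
    · intro a ha
      simp only [Finset.mem_Ico] at ha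
      have : min a (p - a) = p - a := min_eq_right (by omega)
      rw [this]
  rw [hfirst, hsecond]
  have hhalf : ∑ j ∈ Finset.Icc 1 H, (p:ℝ)/(2 * (j:ℝ))
      = (p:ℝ)/2 * ∑ j ∈ Finset.Icc 1 H, (1:ℝ)/(j:ℝ) := by
    rw [Finset.mul_sum]
    refine Finset.sum_congr rfl fun j _ => ?_
    rw [div_mul_div_comm, mul_one]
  rw [hhalf]
  have hharm := aux_harmonic_le_log H
  have hlog : Real.log (2 * (H:ℝ) + 1) = Real.log p := by
    congr 1
    rw [hpH]
    push_cast
    ring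
  rw [hlog] at hharm
  have hp0 : (0:ℝ) ≤ p := by positivity
  nlinarith [mul_le_mul_of_nonneg_left hharm (by positivity : (0:ℝ) ≤ (p:ℝ)/2)]

lemma aux_T_bound (p : ℕ) [Fact p.Prime] (hp : Odd p) :
    |∑ x ∈ Finset.univ.filter (fun x : ZMod p => 1 ≤ x.val ∧ x.val ≤ (p-1)/2),
        ((quadraticChar (ZMod p) x : ℤ) : ℝ)| ≤ Real.sqrt p * Real.log p := by
  haveI : NeZero p := ⟨(Fact.out : p.Prime).ne_zero⟩
  have hpodd : p % 2 = 1 := Nat.odd_iff.mp hp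
  have hp2 : 2 ≤ p := (Fact.out : p.Prime).two_le
  have hchar2 : ringChar (ZMod p) ≠ 2 := by
    rw [ZMod.ringChar_zmod_n]
    omega
  set A : Finset (ZMod p) := Finset.univ.filter
    (fun x : ZMod p => 1 ≤ x.val ∧ x.val ≤ (p-1)/2) with hA
  set χ : MulChar (ZMod p) ℂ :=
    (quadraticChar (ZMod p)).ringHomComp (Int.castRingHom ℂ) with hχ
  set ψ : AddChar (ZMod p) ℂ := ZMod.stdAddChar with hψ
  have hχ1 : χ ≠ 1 := by
    intro h
    exact quadraticChar_ne_one hchar2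
      ((MulChar.ringHomComp_eq_one_iff Int.cast_injective).mp h)
  have hχq : χ.IsQuadratic := (quadraticChar_isQuadratic (ZMod p)).comp _
  have hψprim : ψ.IsPrimitive := ZMod.isPrimitive_stdAddChar p
  set τ : ℂ := gaussSum χ ψ with hτ
  have hcard : (Fintype.card (ZMod p) : ℂ) = (p : ℂ) := by rw [ZMod.card]
  have hτ0 : τ ≠ 0 := by
    refine gaussSum_ne_zero_of_nontrivial ?_ hχ1 hψprim
    rw [hcard]
    exact_mod_cast (Nat.cast_ne_zero (R := ℂ)).mpr (by omega)
  have habsτ : ‖τ‖ = Real.sqrt p := by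
    have hsq : τ ^ 2 = χ (-1) * Fintype.card (ZMod p) := gaussSum_sq hχ1 hχq hψprim
    have hm1 : ‖(χ (-1))‖ = 1 := by
      rcases hχq (-1) with h | h | h
      · exfalso
        apply hτ0
        have : τ ^ 2 = 0 := by rw [hsq, h, zero_mul]
        exact pow_eq_zero_iff (by norm_num) |>.mp this
      · rw [h, norm_one]
      · rw [h]
        simp
    have habs2 : ‖τ‖ ^ 2 = p := by
      rw [← norm_pow, hsq, norm_mul, hm1, one_mul, hcard]
      simp
    rw [← habs2, Real.sqrt_sq (norm_nonneg _)]
  -- inversion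
  have hinv : ∀ x ∈ A, χ x * τ = ∑ k : ZMod p, χ k * ψ (x * k) := by
    intro x hx
    have hx0 : x ≠ 0 := by
      simp only [hA, Finset.mem_filter] at hx
      intro h
      rw [h] at hx
      simp [ZMod.val_zero] at hx
    have hu : IsUnit x := isUnit_iff_ne_zero.mpr hx0
    have hshift := gaussSum_mulShift χ ψ hu.unit
    rw [IsUnit.unit_spec] at hshift
    have hG : gaussSum χ (AddChar.mulShift ψ x) = ∑ k : ZMod p, χ k * ψ (x * k) := by
      simp [gaussSum, AddChar.mulShift_apply, mul_comm]
    have hχx2 : χ x * χ x = 1 := by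
      have hne : χ x ≠ 0 := by
        intro h
        have : χ x * χ x⁻¹ = 1 := by
          rw [← map_mul, mul_inv_cancel₀ hx0, map_one]
        rw [h, zero_mul] at this
        exact zero_ne_one this
      rcases hχq x with h | h | h
      · exact absurd h hne
      · rw [h, mul_one]
      · rw [h]; norm_num
    calc χ x * τ = χ x * (χ x * gaussSum χ (AddChar.mulShift ψ x)) := by rw [hshift]
      _ = (χ x * χ x) * gaussSum χ (AddChar.mulShift ψ x) := by ring
      _ = ∑ k : ZMod p, χ k * ψ (x * k) := by rw [hχx2, one_mul, hG]
  have hkey : (∑ x ∈ A, χ x) * τ = ∑ k : ZMod p, χ k * ∑ x ∈ A, ψ (k * x) := by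
    rw [Finset.sum_mul]
    rw [Finset.sum_congr rfl hinv, Finset.sum_comm]
    refine Finset.sum_congr rfl fun k _ => ?_
    rw [Finset.mul_sum]
    exact Finset.sum_congr rfl fun x _ => by rw [mul_comm x k]
  -- bound the RHS
  have hbound : ‖(∑ k : ZMod p, χ k * ∑ x ∈ A, ψ (k * x))‖
      ≤ (p:ℝ) * Real.log p := by
    refine le_trans (norm_sum_le Finset.univ (fun k => χ k * ∑ x ∈ A, ψ (k * x))) ?_
    have h0 : ‖(χ 0 * ∑ x ∈ A, ψ (0 * x))‖ = 0 := by
      rw [MulChar.map_zero, zero_mul, norm_zero]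
    rw [← Finset.sum_erase (f := fun k => ‖(χ k * ∑ x ∈ A, ψ (k * x))‖) Finset.univ h0]
    have hstep : ∀ k ∈ Finset.univ.erase (0 : ZMod p),
        ‖(χ k * ∑ x ∈ A, ψ (k * x))‖
          ≤ (p : ℝ) / (2 * ((min k.val (p - k.val) : ℕ) : ℝ)) := by
      intro k hk
      have hk0 : k ≠ 0 := (Finset.mem_erase.mp hk).1
      have habsχ : ‖(χ k)‖ = 1 := by
        have hne : χ k ≠ 0 := by
          intro h
          have : χ k * χ k⁻¹ = 1 := by
            rw [← map_mul, mul_inv_cancel₀ hk0, map_one]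
          rw [h, zero_mul] at this
          exact zero_ne_one this
        rcases hχq k with h | h | h
        · exact absurd h hne
        · rw [h, norm_one]
        · rw [h]; simp
      rw [norm_mul, habsχ, one_mul]
      exact aux_psi_bound p hp k hk0
    refine le_trans (Finset.sum_le_sum hstep) ?_
    have hreindex : ∑ k ∈ Finset.univ.erase (0 : ZMod p),
        (p : ℝ) / (2 * ((min k.val (p - k.val) : ℕ) : ℝ))
        = ∑ j ∈ Finset.Icc 1 (p-1), (p:ℝ)/(2 * ((min j (p - j) : ℕ) : ℝ)) := by
      refine Finset.sum_nbij' (fun k => k.val) (fun j => (j : ZMod p)) ?_ ?_ ?_ ?_ ?_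
      · intro a ha
        have ha0 : a ≠ 0 := (Finset.mem_erase.mp ha).1
        have h1 : 1 ≤ a.val := ZMod.val_pos.mpr ha0
        have h2 : a.val < p := ZMod.val_lt a
        simp only [Finset.mem_Icc]
        omega
      · intro j hj
        simp only [Finset.mem_Icc] at hj
        have hjp : j < p := by omega
        refine Finset.mem_erase.mpr ⟨?_, Finset.mem_univ _⟩
        intro h
        have h' : (j : ZMod p) = 0 := h
        have : (j : ZMod p).val = 0 := by rw [h', ZMod.val_zero]
        rw [ZMod.val_natCast_of_lt hjp] at this
        omega
      · intro a _
        exact ZMod.natCast_rightInverse a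
      · intro j hj
        simp only [Finset.mem_Icc] at hj
        exact ZMod.val_natCast_of_lt (by omega)
      · intro a _
        rfl
    rw [hreindex]
    exact aux_sum_min p hp hp2
  -- put together
  have hTc : (∑ x ∈ A, χ x)
      = ((∑ x ∈ A, (quadraticChar (ZMod p) x : ℤ) : ℤ) : ℂ) := by
    push_cast
    rfl
  have habsT : ‖(∑ x ∈ A, χ x)‖
      = |∑ x ∈ A, ((quadraticChar (ZMod p) x : ℤ) : ℝ)| := by
    rw [hTc, Complex.norm_intCast]
    push_cast
    rfl
  have hmain : |∑ x ∈ A, ((quadraticChar (ZMod p) x : ℤ) : ℝ)| * Real.sqrt p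
      ≤ (p:ℝ) * Real.log p := by
    rw [← habsT, ← habsτ, ← norm_mul, hkey]
    exact hbound
  have hsqrtpos : (0:ℝ) < Real.sqrt p := Real.sqrt_pos.mpr (by positivity)
  have hps : (p:ℝ) = Real.sqrt p * Real.sqrt p := (Real.mul_self_sqrt (by positivity)).symm
  have hlognn : 0 ≤ Real.log p := Real.log_nonneg (by exact_mod_cast hp2.trans' (by norm_num))
  have hdiv : |∑ x ∈ A, ((quadraticChar (ZMod p) x : ℤ) : ℝ)|
      ≤ (p:ℝ) * Real.log p / Real.sqrt p := (le_div_iff₀ hsqrtpos).mpr hmain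
  have heq : (p:ℝ) * Real.log p / Real.sqrt p = Real.sqrt p * Real.log p := by
    rw [div_eq_iff hsqrtpos.ne']
    nth_rewrite 1 [hps]
    ring
  rw [heq] at hdiv
  exact hdiv

theorem nonsquares_in_half_interval (p : ℕ) [Fact p.Prime] (hp : Odd p) :
    |((Finset.univ.filter fun x : ZMod p =>
          ¬ IsSquare x ∧ 1 ≤ x.val ∧ x.val ≤ (p - 1) / 2).card : ℝ) -
        ((p : ℝ) - 1) / 4| ≤ (1 / 2) * Real.sqrt p * Real.log p := by
  haveI : NeZero p := ⟨(Fact.out : p.Prime).ne_zero⟩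
  have hpodd : p % 2 = 1 := Nat.odd_iff.mp hp
  have hp2 : 2 ≤ p := (Fact.out : p.Prime).two_le
  have hT := aux_T_bound p hp
  set A : Finset (ZMod p) := Finset.univ.filter
    (fun x : ZMod p => 1 ≤ x.val ∧ x.val ≤ (p-1)/2) with hA
  set N : Finset (ZMod p) := Finset.univ.filter
    (fun x : ZMod p => ¬ IsSquare x ∧ 1 ≤ x.val ∧ x.val ≤ (p - 1) / 2) with hN
  set T : ℝ := ∑ x ∈ A, ((quadraticChar (ZMod p) x : ℤ) : ℝ) with hTdef
  -- N as a filter of A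
  have hNA : N = A.filter (fun x => ¬ IsSquare x) := by
    rw [hN, hA, Finset.filter_filter]
    apply Finset.filter_congr
    intro x _
    tauto
  -- card of A
  have hcardA : A.card = (p-1)/2 := by
    have hbij : A.card = (Finset.Icc 1 ((p-1)/2)).card := by
      rw [hA]
      apply Finset.card_nbij (fun x => x.val)
      · intro a ha
        simp only [Finset.mem_coe, Finset.mem_filter, Finset.mem_univ, true_and] at ha
        simp [Finset.mem_Icc, ha.1, ha.2]
      · intro a _ b _ hab
        exact ZMod.val_injective p hab
      · intro j hj
        simp only [Finset.coe_Icc, Set.mem_Icc] at hj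
        refine (Set.mem_image _ _ _).mpr ⟨(j : ZMod p), ?_, ?_⟩
        · simp only [Finset.coe_filter, Finset.mem_univ, true_and, Set.mem_setOf_eq]
          rw [ZMod.val_natCast_of_lt (by omega)]
          exact hj
        · exact ZMod.val_natCast_of_lt (by omega)
    rw [hbij, Nat.card_Icc]
    omega
  -- sum of quadratic character over A
  have hsum : T = (A.card : ℝ) - 2 * (N.card : ℝ) := by
    rw [hTdef]
    have hterm : ∀ x ∈ A, ((quadraticChar (ZMod p) x : ℤ) : ℝ)
        = 1 - 2 * (if ¬ IsSquare x then (1:ℝ) else 0) := by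
      intro x hx
      have hx0 : x ≠ 0 := by
        simp only [hA, Finset.mem_filter] at hx
        intro h
        rw [h] at hx
        simp [ZMod.val_zero] at hx
      by_cases hsq : IsSquare x
      · rw [(quadraticChar_one_iff_isSquare hx0).mpr hsq]
        simp [hsq]
      · rw [quadraticChar_neg_one_iff_not_isSquare.mpr hsq]
        norm_num [hsq]
    rw [Finset.sum_congr rfl hterm, Finset.sum_sub_distrib, ← Finset.mul_sum,
      Finset.sum_boole, Finset.sum_const, nsmul_eq_mul, mul_one, hNA]
  -- final arithmetic
  have hpr : (p : ℝ) - 1 = 2 * (((p-1)/2 : ℕ) : ℝ) := by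
    have h' : p - 1 = 2 * ((p-1)/2) := by omega
    have h1 : 1 ≤ p := by omega
    have h2 : ((2 * ((p-1)/2) : ℕ) : ℝ) = 2 * (((p-1)/2 : ℕ) : ℝ) := by push_cast; ring
    rw [← h2, ← h', Nat.cast_sub h1]
    norm_num
  have hfin : (N.card : ℝ) - ((p : ℝ) - 1) / 4 = -(T/2) := by
    rw [hsum, hcardA, hpr]
    ring
  rw [hfin, abs_neg, abs_div]
  have h2 : |(2:ℝ)| = 2 := by norm_num
  rw [h2]
  linarith [hT]
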